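/- Let n ≥ 1 and let C ⊆ 𝔽₃ⁿ be a greedy capset. Then there exists an affine hyperplane H₀ ⊆ 𝔽₃ⁿ with C ∩ H₀ = ∅ such that, for each of the two affine hyperplanes H₁, H₂ parallel to H₀ and for any affine bijection φ : 𝔽₃ⁿ⁻¹ → Hᵢ (i = 1, 2), the preimage φ⁻¹(C ∩ Hᵢ) is a greedy capset in 𝔽₃ⁿ⁻¹. -/

import Mathlib

/-- A line in `𝔽₃ⁿ`: a coset of a one-dimensional linear subspace. -/
def IsLine {n : ℕ} (L : Set (Fin n → ZMod 3)) : Prop :=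
  ∃ p v : Fin n → ZMod 3, v ≠ 0 ∧ L = {x | ∃ t : ZMod 3, x = p + t • v}

/-- A capset: a subset of `𝔽₃ⁿ` containing no line. -/
def IsCapset {n : ℕ} (C : Set (Fin n → ZMod 3)) : Prop :=
  ∀ L : Set (Fin n → ZMod 3), IsLine L → ¬ L ⊆ C

/-- `lineDeg S P`: the number of lines through `P` that are contained in `S`. -/
noncomputable def lineDeg {n : ℕ} (S : Set (Fin n → ZMod 3)) (P : Fin n → ZMod 3) : ℕ :=
  Set.ncard {L : Set (Fin n → ZMod 3) | IsLine L ∧ P ∈ L ∧ L ⊆ S}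

/-- The sequence of sets in a greedy construction removing the points `P 0, P 1, …`. -/
def greedySeq {n : ℕ} (P : ℕ → (Fin n → ZMod 3)) : ℕ → Set (Fin n → ZMod 3)
  | 0 => Set.univ
  | (i+1) => greedySeq P i \ {P i}

/-- A greedy capset: a capset obtained from `𝔽₃ⁿ` by successively removing a point whose
number of lines through it contained in the remaining set is positive and maximal,
until the remaining set is a capset. -/
def IsGreedyCapset {n : ℕ} (C : Set (Fin n → ZMod 3)) : Prop :=
  ∃ (k : ℕ) (P : ℕ → (Fin n → ZMod 3)),
    (∀ i < k, P i ∈ greedySeq P i ∧ 0 < lineDeg (greedySeq P i) (P i) ∧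
      ∀ Q ∈ greedySeq P i, lineDeg (greedySeq P i) Q ≤ lineDeg (greedySeq P i) (P i)) ∧
    C = greedySeq P k ∧ IsCapset C

/-- An affine hyperplane in `𝔽₃ⁿ`: the solution set of one nontrivial linear equation. -/
def IsHyperplane {n : ℕ} (H : Set (Fin n → ZMod 3)) : Prop :=
  ∃ (a : Fin n → ZMod 3) (b : ZMod 3), a ≠ 0 ∧ H = {x | ∑ i, a i * x i = b}

/-- `H₀, H₁, H₂` form a triple of parallel affine hyperplanes partitioning `𝔽₃ⁿ`
(`H₁` and `H₂` are the two hyperplanes parallel to `H₀`). -/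
def ParallelTriple {n : ℕ} (H₀ H₁ H₂ : Set (Fin n → ZMod 3)) : Prop :=
  ∃ (a : Fin n → ZMod 3) (b : ZMod 3), a ≠ 0 ∧
    H₀ = {x | ∑ i, a i * x i = b} ∧
    H₁ = {x | ∑ i, a i * x i = b + 1} ∧
    H₂ = {x | ∑ i, a i * x i = b + 2}

namespace GCap

abbrev V (n : ℕ) := Fin n → ZMod 3

variable {n : ℕ}

lemma z3 : ∀ t : ZMod 3, t = 0 ∨ t = 1 ∨ t = 2 := by decide

/-- pointwise identity lifter -/
lemma pt2 {f : ZMod 3 → ZMod 3 → ZMod 3} {g : ZMod 3 → ZMod 3 → ZMod 3}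
    (h : ∀ x y : ZMod 3, f x y = g x y) (a b : V n)
    : (fun i => f (a i) (b i)) = fun i => g (a i) (b i) := by
  funext i; exact h _ _

lemma neg_add_self' (a : V n) : -(a + a) = a := by
  funext i
  have : ∀ x : ZMod 3, -(x + x) = x := by decide
  simpa using this (a i)

lemma third_third (a b : V n) : -(a + -(a + b)) = b := by
  funext i
  have : ∀ x y : ZMod 3, -(x + -(x + y)) = y := by decide
  simpa using this (a i) (b i)

/-- the line through `a` and `b`. -/
def tri (a b : V n) : Set (V n) := {a, b, -(a + b)}

lemma tri_comm (a b : V n) : tri a b = tri b a := by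
  unfold tri
  rw [Set.insert_comm, add_comm]

lemma third_ne_left {a b : V n} (h : a ≠ b) : -(a + b) ≠ a := by
  intro hc
  apply h
  have := third_third a b
  rw [hc] at this
  rw [← this, neg_add_self']

lemma third_ne_right {a b : V n} (h : a ≠ b) : -(a + b) ≠ b := by
  rw [add_comm]; exact third_ne_left h.symm

lemma mem_tri_left (a b : V n) : a ∈ tri a b := by left; rfl
lemma mem_tri_mid (a b : V n) : b ∈ tri a b := by right; left; rfl
lemma mem_tri_third (a b : V n) : -(a + b) ∈ tri a b := by right; right; rfl

lemma tri_third_eq (a b : V n) : tri a (-(a+b)) = tri a b := by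
  unfold tri
  rw [third_third]
  ext x
  simp only [Set.mem_insert_iff, Set.mem_singleton_iff]
  tauto

lemma smul2 (a : V n) : (2 : ZMod 3) • a = -a := by
  funext i
  have : ∀ x : ZMod 3, (2 : ZMod 3) * x = -x := by decide
  simpa using this (a i)

lemma tri_isLine {a b : V n} (h : a ≠ b) : IsLine (tri a b) := by
  refine ⟨a, b - a, sub_ne_zero.mpr h.symm, ?_⟩
  ext x
  constructor
  · intro hx
    rcases hx with h1 | h1 | h1
    · exact ⟨0, by simp [h1]⟩
    · exact ⟨1, by simp [h1]⟩
    · refine ⟨2, ?_⟩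
      rw [h1, smul2]
      funext i
      have : ∀ x y : ZMod 3, -(x + y) = x + -(y - x) := by decide
      simpa using this (a i) (b i)
  · rintro ⟨t, rfl⟩
    rcases z3 t with rfl | rfl | rfl
    · simp [tri]
    · simp only [one_smul]
      right; left
      funext i; simpa using (by decide : ∀ x y : ZMod 3, x + (y - x) = y) (a i) (b i)
    · right; right
      rw [smul2]
      funext i
      simpa using (by decide : ∀ x y : ZMod 3, x + -(y - x) = -(x + y)) (a i) (b i)

lemma line_eq_tri {L : Set (V n)} {Q : V n} (hL : IsLine L) (hQ : Q ∈ L) :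
    ∃ x, x ≠ Q ∧ L = tri Q x := by
  obtain ⟨p, v, hv, rfl⟩ := hL
  obtain ⟨s, rfl⟩ := hQ
  refine ⟨p + s • v + v, ?_, ?_⟩
  · intro hc
    apply hv
    have := congrArg (fun z => z - (p + s • v)) hc
    simpa using this
  · ext x
    constructor
    · rintro ⟨t, rfl⟩
      by_cases h1 : t = s
      · subst h1; exact mem_tri_left _ _
      · by_cases h2 : t = s + 1
        · subst h2
          have : p + (s+1) • v = p + s • v + v := by
            rw [add_smul, one_smul, add_assoc]
          rw [this]; exact mem_tri_mid _ _
        · have h3 : t = s + 2 := by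
            rcases z3 (t - s) with h | h | h
            · exact absurd (by linear_combination h) h1
            · exact absurd (by linear_combination h) h2
            · linear_combination h
          subst h3
          have : p + (s+2) • v = -((p + s • v) + (p + s • v + v)) := by
            funext i
            have hz : ∀ a u b : ZMod 3, a + (u+2)*b = -((a + u*b) + ((a + u*b) + b)) := by
              decide
            simpa using hz (p i) s (v i)
          rw [this]; exact mem_tri_third _ _
    · intro hx
      rcases hx with h1 | h1 | h1
      · exact ⟨s, h1⟩
      · exact ⟨s + 1, by rw [h1, add_smul, one_smul, add_assoc]⟩
      · refine ⟨s + 2, ?_⟩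
        rw [h1]
        funext i
        have hz : ∀ a u b : ZMod 3, -((a + u*b) + ((a + u*b) + b)) = a + (u+2)*b := by
          decide
        simpa using hz (p i) s (v i)

end GCap

namespace GCap

variable {n : ℕ}

lemma mem_tri {x a b : V n} : x ∈ tri a b ↔ x = a ∨ x = b ∨ x = -(a+b) := by
  simp [tri]

noncomputable def pcount (R : Set (V n)) (Q : V n) : ℕ :=
  Set.ncard {x | x ∈ R ∧ -(Q + x) ∈ R}

def NS (S : Set (V n)) (Q : V n) : Set (V n) := {x | x ≠ Q ∧ x ∈ S ∧ -(Q + x) ∈ S}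

lemma two_mul_lineDeg {S : Set (V n)} {Q : V n} (hQ : Q ∈ S) :
    2 * lineDeg S Q = (NS S Q).ncard := by
  classical
  set L3 : Set (Set (V n)) := {L | IsLine L ∧ Q ∈ L ∧ L ⊆ S} with hL3
  set t : Finset (Set (V n)) := L3.toFinite.toFinset with ht
  set s : Finset (V n) := (NS S Q).toFinite.toFinset with hs
  have hmem : ∀ x ∈ s, tri Q x ∈ t := by
    intro x hx
    rw [hs, Set.Finite.mem_toFinset] at hx
    obtain ⟨hne, hxS, hthird⟩ := hx
    rw [ht, Set.Finite.mem_toFinset, hL3]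
    refine ⟨tri_isLine (Ne.symm hne), mem_tri_left _ _, ?_⟩
    intro y hy
    rcases mem_tri.mp hy with rfl | rfl | rfl <;> assumption
  have key := Finset.card_eq_sum_card_fiberwise hmem
  have fib : ∀ L ∈ t, (s.filter (fun x => tri Q x = L)).card = 2 := by
    intro L hL
    rw [ht, Set.Finite.mem_toFinset, hL3] at hL
    obtain ⟨hline, hQL, hLS⟩ := hL
    obtain ⟨x₀, hx₀ne, rfl⟩ := line_eq_tri hline hQL
    have hth : -(Q + x₀) ≠ Q := by
      intro hc
      exact hx₀ne (by rw [← third_third Q x₀, hc, neg_add_self'])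
    have hx₀th : x₀ ≠ -(Q + x₀) := (third_ne_right (Ne.symm hx₀ne)).symm
    have hfe : s.filter (fun x => tri Q x = tri Q x₀) = {x₀, -(Q + x₀)} := by
      ext x
      simp only [Finset.mem_filter, Finset.mem_insert, Finset.mem_singleton, hs,
        Set.Finite.mem_toFinset]
      constructor
      · rintro ⟨⟨hne, _, _⟩, heq⟩
        have : x ∈ tri Q x₀ := heq ▸ mem_tri_mid Q x
        rcases mem_tri.mp this with h | h | h
        · exact absurd h hne
        · exact Or.inl h
        · exact Or.inr h
      · rintro (rfl | rfl)
        · refine ⟨⟨hx₀ne, hLS (mem_tri_mid _ _), hLS (mem_tri_third _ _)⟩, rfl⟩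
        · refine ⟨⟨hth, hLS (mem_tri_third _ _), ?_⟩, tri_third_eq Q x₀⟩
          rw [third_third]
          exact hLS (mem_tri_mid _ _)
    rw [hfe, Finset.card_insert_of_notMem (by simpa using hx₀th), Finset.card_singleton]
  rw [Finset.sum_congr rfl fib, Finset.sum_const, smul_eq_mul] at key
  have h1 : lineDeg S Q = t.card := Set.ncard_eq_toFinset_card _ _
  have h2 : (NS S Q).ncard = s.card := Set.ncard_eq_toFinset_card _ _
  rw [h1, h2, key, mul_comm]

lemma count_identity {R : Set (V n)} {Q : V n} (hQ : Q ∉ R) :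
    (NS Rᶜ Q).ncard + R.ncard + R.ncard
      = (Finset.univ.erase Q).card + pcount R Q := by
  classical
  set T : Finset (V n) := Finset.univ.erase Q with hT
  set A : Finset (V n) := T.filter (· ∈ R) with hA
  set B : Finset (V n) := T.filter (fun x => -(Q + x) ∈ R) with hB
  have hthird_ne : ∀ x : V n, x ≠ Q → -(Q + x) ≠ Q := by
    intro x hx hc
    exact hx (by rw [← third_third Q x, hc, neg_add_self'])
  have hAcard : A.card = R.ncard := by
    rw [Set.ncard_eq_toFinset_card R R.toFinite]
    congr 1
    ext x
    have hne : x ∈ R → x ≠ Q := fun h hc => hQ (by rwa [hc] at h)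
    simp only [hA, hT, Finset.mem_filter, Finset.mem_erase, Finset.mem_univ, true_and,
      and_true, Set.Finite.mem_toFinset]
    tauto
  have hBcard : B.card = R.ncard := by
    rw [← hAcard]
    apply Finset.card_bij (fun x _ => -(Q + x))
    · intro a ha
      rw [hB, Finset.mem_filter, hT, Finset.mem_erase] at ha
      rw [hA, Finset.mem_filter, hT, Finset.mem_erase]
      exact ⟨⟨hthird_ne a ha.1.1, Finset.mem_univ _⟩, ha.2⟩
    · intro a ha b hb hab
      have := congrArg (fun z => -(Q + z)) hab
      simpa only [third_third] using this
    · intro b hb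
      rw [hA, Finset.mem_filter, hT, Finset.mem_erase] at hb
      refine ⟨-(Q + b), ?_, third_third Q b⟩
      rw [hB, Finset.mem_filter, hT, Finset.mem_erase]
      refine ⟨⟨hthird_ne b hb.1.1, Finset.mem_univ _⟩, ?_⟩
      rw [third_third]
      exact hb.2
  have hscard : (NS Rᶜ Q).ncard = (T \ (A ∪ B)).card := by
    rw [Set.ncard_eq_toFinset_card _ (NS Rᶜ Q).toFinite]
    congr 1
    ext x
    simp only [Set.Finite.mem_toFinset, NS, Set.mem_setOf_eq, Set.mem_compl_iff,
      Finset.mem_sdiff, Finset.mem_union, hA, hB, Finset.mem_filter, hT,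
      Finset.mem_erase, Finset.mem_univ, true_and, and_true]
    tauto
  have hABcard : (A ∩ B).card = pcount R Q := by
    rw [pcount, Set.ncard_eq_toFinset_card _ (Set.toFinite _)]
    congr 1
    ext x
    simp only [Finset.mem_inter, hA, hB, Finset.mem_filter, hT, Finset.mem_erase,
      Finset.mem_univ, true_and, and_true, Set.Finite.mem_toFinset, Set.mem_setOf_eq]
    constructor
    · rintro ⟨⟨_, h1⟩, _, h2⟩; exact ⟨h1, h2⟩
    · rintro ⟨h1, h2⟩
      have hne : x ≠ Q := fun hc => hQ (by rwa [hc] at h1)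
      exact ⟨⟨hne, h1⟩, hne, h2⟩
  have hsub : A ∪ B ⊆ T := by
    intro x hx
    rcases Finset.mem_union.mp hx with h | h
    · exact Finset.mem_of_mem_filter _ h
    · exact Finset.mem_of_mem_filter _ h
  have h1 : (T \ (A ∪ B)).card + (A ∪ B).card = T.card := Finset.card_sdiff_add_card_eq_card hsub
  have h2 : (A ∪ B).card + (A ∩ B).card = A.card + B.card := Finset.card_union_add_card_inter _ _
  omega

lemma pcount_le_of_deg_le {R : Set (V n)} {Q Q' : V n} (hQ : Q ∉ R) (hQ' : Q' ∉ R)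
    (h : lineDeg Rᶜ Q ≤ lineDeg Rᶜ Q') : pcount R Q ≤ pcount R Q' := by
  have e1 := two_mul_lineDeg (S := Rᶜ) (Q := Q) hQ
  have e2 := two_mul_lineDeg (S := Rᶜ) (Q := Q') hQ'
  have i1 := count_identity hQ
  have i2 := count_identity hQ'
  have hcc : (Finset.univ.erase Q).card = (Finset.univ.erase Q').card := by
    rw [Finset.card_erase_of_mem (Finset.mem_univ _),
      Finset.card_erase_of_mem (Finset.mem_univ _)]
  omega

lemma pcount_pos {R : Set (V n)} {Q : V n} :
    0 < pcount R Q ↔ ∃ x, x ∈ R ∧ -(Q + x) ∈ R := by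
  rw [pcount, Set.ncard_pos (Set.toFinite _)]
  constructor
  · rintro ⟨x, hx⟩; exact ⟨x, hx⟩
  · rintro ⟨x, hx⟩; exact ⟨x, hx⟩

end GCap

namespace GCap

variable {n : ℕ}

def LC (W : Set (V n)) : Prop := ∀ p ∈ W, ∀ q ∈ W, -(p + q) ∈ W

lemma LC.empty : LC (∅ : Set (V n)) := by intro p hp; exact absurd hp (Set.notMem_empty p)

lemma LC.singleton (a : V n) : LC ({a} : Set (V n)) := by
  rintro p rfl q rfl
  simp only [Set.mem_singleton_iff]
  exact neg_add_self' _

lemma LC.mem_of_pcount {U R : Set (V n)} (hU : LC U) (hRU : R ⊆ U) {Q : V n}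
    (h : 0 < pcount R Q) : Q ∈ U := by
  obtain ⟨x, hx, hx2⟩ := pcount_pos.mp h
  have : -(x + -(Q + x)) ∈ U := hU x (hRU hx) _ (hRU hx2)
  rwa [add_comm Q x, third_third] at this

lemma not_LC_witness {R : Set (V n)} (h : ¬ LC R) : ∃ y, y ∉ R ∧ 0 < pcount R y := by
  simp only [LC, not_forall] at h
  obtain ⟨p, hp, q, hq, hpq⟩ := h
  refine ⟨-(p + q), hpq, pcount_pos.mpr ⟨p, hp, ?_⟩⟩
  have : -(-(p + q) + p) = q := by
    funext i
    have : ∀ x y : ZMod 3, -(-(x + y) + x) = y := by decide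
    simpa using this (p i) (q i)
  rw [this]; exact hq

lemma lc_sub {W : Set (V n)} (hW : LC W) {a b c : V n} (ha : a ∈ W) (hb : b ∈ W)
    (hc : c ∈ W) : a + b - c ∈ W := by
  have h1 : -(-(a + b) + c) ∈ W := hW _ (hW a ha b hb) c hc
  have : -(-(a + b) + c) = a + b - c := by
    funext i
    have : ∀ x y z : ZMod 3, -(-(x + y) + z) = x + y - z := by decide
    simpa using this (a i) (b i) (c i)
  rwa [this] at h1

lemma lc_combo {W : Set (V n)} (hW : LC W) {w₀ w₁ w₂ : V n} (h₀ : w₀ ∈ W) (h₁ : w₁ ∈ W)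
    (h₂ : w₂ ∈ W) (c : ZMod 3) : w₀ + c • (w₁ - w₂) ∈ W := by
  rcases z3 c with rfl | rfl | rfl
  · simpa using h₀
  · rw [one_smul, ← add_sub_assoc]
    exact lc_sub hW h₀ h₁ h₂
  · have : w₀ + (2 : ZMod 3) • (w₁ - w₂) = w₀ + w₂ - w₁ := by
      funext i
      have : ∀ x y z : ZMod 3, x + 2 * (y - z) = x + z - y := by decide
      simpa using this (w₀ i) (w₁ i) (w₂ i)
    rw [this]
    exact lc_sub hW h₀ h₂ h₁

def USpan (W : Set (V n)) (w₀ Pt : V n) : Set (V n) :=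
  {x | ∃ w ∈ W, ∃ t : ZMod 3, x = w + t • (Pt - w₀)}

lemma USpan_LC {W : Set (V n)} (hW : LC W) (w₀ Pt : V n) : LC (USpan W w₀ Pt) := by
  rintro p ⟨w₁, hw₁, t₁, rfl⟩ q ⟨w₂, hw₂, t₂, rfl⟩
  refine ⟨-(w₁ + w₂), hW _ hw₁ _ hw₂, -(t₁ + t₂), ?_⟩
  funext i
  have : ∀ a b u s t : ZMod 3, -(a + s * u + (b + t * u)) = -(a + b) + -(s + t) * u := by
    decide
  simpa using this (w₁ i) (w₂ i) ((Pt - w₀) i) t₁ t₂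

lemma USpan_subset {W : Set (V n)} (w₀ Pt : V n) : W ⊆ USpan W w₀ Pt := by
  intro w hw
  exact ⟨w, hw, 0, by simp⟩

lemma USpan_pt_mem {W : Set (V n)} {w₀ : V n} (hw₀ : w₀ ∈ W) (Pt : V n) :
    Pt ∈ USpan W w₀ Pt := ⟨w₀, hw₀, 1, by simp⟩

lemma USpan_min {W R : Set (V n)} {w₀ Pt : V n} (hR : LC R) (hWR : W ⊆ R) (hP : Pt ∈ R)
    (hw₀ : w₀ ∈ W) : USpan W w₀ Pt ⊆ R := by
  rintro x ⟨w, hw, t, rfl⟩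
  rcases z3 t with rfl | rfl | rfl
  · simpa using hWR hw
  · have h1 : -(-(w + Pt) + w₀) ∈ R := hR _ (hR w (hWR hw) _ hP) _ (hWR hw₀)
    have : -(-(w + Pt) + w₀) = w + (1 : ZMod 3) • (Pt - w₀) := by
      funext i
      have : ∀ a b c : ZMod 3, -(-(a + b) + c) = a + 1 * (b - c) := by decide
      simpa using this (w i) (Pt i) (w₀ i)
    rwa [this] at h1
  · have h1 : -(Pt + -(w + w₀)) ∈ R := hR _ hP _ (hR w (hWR hw) _ (hWR hw₀))
    have : -(Pt + -(w + w₀)) = w + (2 : ZMod 3) • (Pt - w₀) := by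
      funext i
      have : ∀ a b c : ZMod 3, -(b + -(a + c)) = a + 2 * (b - c) := by decide
      simpa using this (w i) (Pt i) (w₀ i)
    rwa [this] at h1

lemma USpan_ncard {W : Set (V n)} {w₀ Pt : V n} (hW : LC W) (hw₀ : w₀ ∈ W)
    (hPt : Pt ∉ W) : (USpan W w₀ Pt).ncard = 3 * W.ncard := by
  classical
  set v : V n := Pt - w₀ with hv
  have hWt : ∀ t : ZMod 3, ((fun w => w + t • v) '' W).ncard = W.ncard := by
    intro t
    exact Set.ncard_image_of_injective _ (add_left_injective (t • v))
  have hunion : USpan W w₀ Pt =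
      ((fun w => w + (0:ZMod 3) • v) '' W) ∪ ((fun w => w + (1:ZMod 3) • v) '' W)
        ∪ ((fun w => w + (2:ZMod 3) • v) '' W) := by
    ext x
    constructor
    · rintro ⟨w, hw, t, rfl⟩
      rcases z3 t with rfl | rfl | rfl
      · exact Or.inl (Or.inl ⟨w, hw, rfl⟩)
      · exact Or.inl (Or.inr ⟨w, hw, rfl⟩)
      · exact Or.inr ⟨w, hw, rfl⟩
    · rintro ((⟨w, hw, rfl⟩ | ⟨w, hw, rfl⟩) | ⟨w, hw, rfl⟩)
      · exact ⟨w, hw, 0, rfl⟩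
      · exact ⟨w, hw, 1, rfl⟩
      · exact ⟨w, hw, 2, rfl⟩
  have hdisj : ∀ t₁ t₂ : ZMod 3, t₁ ≠ t₂ →
      Disjoint ((fun w => w + t₁ • v) '' W) ((fun w => w + t₂ • v) '' W) := by
    intro t₁ t₂ hne
    rw [Set.disjoint_left]
    rintro x ⟨w₁, hw₁, rfl⟩ ⟨w₂, hw₂, heq⟩
    apply hPt
    have hkey : ∀ c : ZMod 3, v = c • (w₂ - w₁) → Pt ∈ W := by
      intro c hveq
      have hPeq : Pt = w₀ + c • (w₂ - w₁) := by rw [← hveq, hv]; abel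
      rw [hPeq]
      exact lc_combo hW hw₀ hw₂ hw₁ _
    have hcomp : ∀ i, w₁ i + t₁ * v i = w₂ i + t₂ * v i := by
      intro i
      have := congrFun heq i
      simpa using this.symm
    have solve : ∀ c : ZMod 3, (∀ a b u : ZMod 3, a + t₁ * u = b + t₂ * u → u = c * (b - a)) →
        Pt ∈ W := by
      intro c hc
      apply hkey c
      funext i
      simpa using hc (w₁ i) (w₂ i) (v i) (hcomp i)
    rcases z3 t₁ with rfl | rfl | rfl <;> rcases z3 t₂ with rfl | rfl | rfl
    · exact absurd rfl hne
    · exact solve 2 (by decide)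
    · exact solve 1 (by decide)
    · exact solve 1 (by decide)
    · exact absurd rfl hne
    · exact solve 2 (by decide)
    · exact solve 2 (by decide)
    · exact solve 1 (by decide)
    · exact absurd rfl hne
  rw [hunion]
  rw [Set.ncard_union_eq (Set.disjoint_union_left.mpr
      ⟨hdisj 0 2 (by decide), hdisj 1 2 (by decide)⟩)
    ((Set.toFinite _).union (Set.toFinite _)) (Set.toFinite _),
    Set.ncard_union_eq (hdisj 0 1 (by decide)) (Set.toFinite _) (Set.toFinite _),
    hWt, hWt, hWt]
  ring

/-! ### the removed-set sequence -/

def Rem (P : ℕ → V n) (i : ℕ) : Set (V n) := {x | ∃ j < i, x = P j}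

lemma Rem_zero (P : ℕ → V n) : Rem P 0 = ∅ := by
  ext x; simp [Rem]

lemma Rem_succ (P : ℕ → V n) (i : ℕ) : Rem P (i + 1) = insert (P i) (Rem P i) := by
  ext x
  simp only [Rem, Set.mem_setOf_eq, Set.mem_insert_iff]
  constructor
  · rintro ⟨j, hj, rfl⟩
    rcases Nat.lt_succ_iff_lt_or_eq.mp hj with h | rfl
    · exact Or.inr ⟨j, h, rfl⟩
    · exact Or.inl rfl
  · rintro (rfl | ⟨j, hj, rfl⟩)
    · exact ⟨i, Nat.lt_succ_self i, rfl⟩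
    · exact ⟨j, Nat.lt_succ_of_lt hj, rfl⟩

lemma Rem_mono (P : ℕ → V n) {i i' : ℕ} (h : i ≤ i') : Rem P i ⊆ Rem P i' := by
  rintro x ⟨j, hj, rfl⟩
  exact ⟨j, lt_of_lt_of_le hj h, rfl⟩

lemma greedySeq_eq (P : ℕ → V n) (i : ℕ) : greedySeq P i = (Rem P i)ᶜ := by
  induction i with
  | zero => rw [Rem_zero]; simp [greedySeq]
  | succ i ih =>
    show greedySeq P i \ {P i} = _
    rw [ih, Rem_succ]
    ext x
    simp only [Set.mem_diff, Set.mem_compl_iff, Set.mem_insert_iff, Set.mem_singleton_iff]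
    tauto

/-- greedy-run hypotheses, phrased with `greedySeq`. -/
def GreedyRun (P : ℕ → V n) (k : ℕ) : Prop :=
  ∀ i < k, P i ∈ greedySeq P i ∧ 0 < lineDeg (greedySeq P i) (P i) ∧
    ∀ Q ∈ greedySeq P i, lineDeg (greedySeq P i) Q ≤ lineDeg (greedySeq P i) (P i)

lemma GreedyRun.not_mem {P : ℕ → V n} {k : ℕ} (h : GreedyRun P k) {i : ℕ} (hi : i < k) :
    P i ∉ Rem P i := by
  have := (h i hi).1
  rwa [greedySeq_eq, Set.mem_compl_iff] at this

lemma GreedyRun.pcount_max {P : ℕ → V n} {k : ℕ} (h : GreedyRun P k) {i : ℕ} (hi : i < k)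
    {Q : V n} (hQ : Q ∉ Rem P i) :
    pcount (Rem P i) Q ≤ pcount (Rem P i) (P i) := by
  obtain ⟨h1, _, h3⟩ := h i hi
  rw [greedySeq_eq] at h1 h3
  exact pcount_le_of_deg_le hQ h1 (h3 Q hQ)

/-- The main invariant. -/
def Inv (P : ℕ → V n) (i : ℕ) : Prop :=
  (LC (Rem P i) ∧ (Rem P i = ∅ ∨ ∃ d : ℕ, (Rem P i).ncard = 3 ^ d))
  ∨ ∃ j w₀ d, j < i ∧ LC (Rem P j) ∧ w₀ ∈ Rem P j ∧ (Rem P j).ncard = 3 ^ d ∧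
      P j ∉ Rem P j ∧ insert (P j) (Rem P j) ⊆ Rem P i ∧
      Rem P i ⊆ USpan (Rem P j) w₀ (P j)

lemma inv_expand {P : ℕ → V n} {k i : ℕ} (hg : GreedyRun P k) (hi : i < k)
    (hlc : LC (Rem P i)) (hcard : Rem P i = ∅ ∨ ∃ d : ℕ, (Rem P i).ncard = 3 ^ d) :
    Inv P (i + 1) := by
  rcases hcard with hemp | ⟨d, hd⟩
  · left
    rw [Rem_succ, hemp]
    constructor
    · simpa using LC.singleton (P i)
    · right
      exact ⟨0, by simp⟩
  · have hne : (Rem P i).Nonempty := by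
      rw [Set.nonempty_iff_ne_empty]
      intro hc
      rw [hc, Set.ncard_empty] at hd
      exact (pow_pos (by norm_num : (0:ℕ) < 3) d).ne' hd.symm
    obtain ⟨w₀, hw₀⟩ := hne
    right
    refine ⟨i, w₀, d, Nat.lt_succ_self i, hlc, hw₀, hd, hg.not_mem hi, ?_, ?_⟩
    · rw [Rem_succ]
    · rw [Rem_succ]
      exact Set.insert_subset (USpan_pt_mem hw₀ _) (USpan_subset _ _)

lemma inv_step {P : ℕ → V n} {k i : ℕ} (hg : GreedyRun P k) (hi : i < k)
    (h : Inv P i) : Inv P (i + 1) := by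
  rcases h with ⟨hlc, hcard⟩ | ⟨j, w₀, d, hj, hlcW, hw₀, hd, hPj, hins, hsub⟩
  · exact inv_expand hg hi hlc hcard
  · by_cases hU : Rem P i = USpan (Rem P j) w₀ (P j)
    · apply inv_expand hg hi
      · rw [hU]; exact USpan_LC hlcW _ _
      · right
        refine ⟨d + 1, ?_⟩
        rw [hU, USpan_ncard hlcW hw₀ hPj, hd, pow_succ, mul_comm]
    · have hnlc : ¬ LC (Rem P i) := by
        intro hlc
        apply hU
        apply Set.Subset.antisymm hsub
        apply USpan_min hlc _ _ hw₀
        · exact subset_trans (Set.subset_insert _ _) hins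
        · exact hins (Set.mem_insert _ _)
      obtain ⟨y, hy, hypos⟩ := not_LC_witness hnlc
      have hmax := hg.pcount_max hi hy
      have hPpos : 0 < pcount (Rem P i) (P i) := lt_of_lt_of_le hypos hmax
      have hPU : P i ∈ USpan (Rem P j) w₀ (P j) :=
        LC.mem_of_pcount (USpan_LC hlcW _ _) hsub hPpos
      right
      refine ⟨j, w₀, d, Nat.lt_succ_of_lt hj, hlcW, hw₀, hd, hPj, ?_, ?_⟩
      · exact subset_trans hins (by rw [Rem_succ]; exact Set.subset_insert _ _)
      · rw [Rem_succ]
        exact Set.insert_subset hPU hsub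

lemma inv_all {P : ℕ → V n} {k : ℕ} (hg : GreedyRun P k) : ∀ i ≤ k, Inv P i := by
  intro i hik
  induction i with
  | zero => left; rw [Rem_zero]; exact ⟨LC.empty, Or.inl rfl⟩
  | succ i ih =>
    exact inv_step hg (lt_of_lt_of_le (Nat.lt_succ_self i) hik)
      (ih (le_of_lt (lt_of_lt_of_le (Nat.lt_succ_self i) hik)))

end GCap

namespace GCap

variable {n : ℕ}

lemma card_V : Nat.card (V n) = 3 ^ n := by
  rw [Nat.card_eq_fintype_card]
  simp [Fintype.card_fun]

lemma tri_subset_iff {a b : V n} {S : Set (V n)} :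
    tri a b ⊆ S ↔ a ∈ S ∧ b ∈ S ∧ -(a + b) ∈ S := by
  constructor
  · intro h
    exact ⟨h (mem_tri_left _ _), h (mem_tri_mid _ _), h (mem_tri_third _ _)⟩
  · rintro ⟨h1, h2, h3⟩ x hx
    rcases mem_tri.mp hx with rfl | rfl | rfl <;> assumption

/-- capset bound: a capset has at most `2 * 3^(n-1)` points. -/
lemma capset_card_le {C : Set (V n)} (hn : 1 ≤ n) (hC : IsCapset C) :
    C.ncard ≤ 2 * 3 ^ (n - 1) := by
  classical
  set i0 : Fin n := ⟨0, hn⟩ with hi0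
  set v : V n := Pi.single i0 1 with hv
  have hvi0 : v i0 = 1 := by rw [hv]; simp
  set π : V n → V n := fun x => Function.update x i0 0 with hπ
  set t : Finset (V n) := Finset.image π Finset.univ with htdef
  have hyi0 : ∀ y ∈ t, y i0 = 0 := by
    intro y hy
    rw [htdef, Finset.mem_image] at hy
    obtain ⟨x, _, rfl⟩ := hy
    simp [hπ]
  have hπadd : ∀ (y : V n), y i0 = 0 → ∀ s : ZMod 3, π (y + s • v) = y := by
    intro y hy s
    funext j
    by_cases hj : j = i0
    · subst hj; simp [hπ, hy]
    · simp [hπ, Function.update_of_ne hj, hv, Pi.single_eq_of_ne hj]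
  have hfiber_eq : ∀ y ∈ t, ∀ x : V n, π x = y ↔ ∃ s : ZMod 3, x = y + s • v := by
    intro y hy x
    constructor
    · intro hx
      refine ⟨x i0, ?_⟩
      funext j
      by_cases hj : j = i0
      · subst hj
        rw [Pi.add_apply, Pi.smul_apply, hvi0, hyi0 y hy]
        simp
      · have := congrFun hx j
        rw [hπ] at this
        simp only [Function.update_of_ne hj] at this
        rw [Pi.add_apply, Pi.smul_apply, hv, Pi.single_eq_of_ne hj, ← this]
        simp
    · rintro ⟨s, rfl⟩
      exact hπadd y (hyi0 y hy) s
  have htriple : ∀ y : V n, ({y, y + v, y + (2:ZMod 3) • v} : Finset (V n)).card = 3 := by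
    intro y
    have h1 : y ≠ y + v := by
      intro hc
      have := congrFun hc i0
      rw [Pi.add_apply, hvi0] at this
      simp at this
    have h2 : y ≠ y + (2:ZMod 3) • v := by
      intro hc
      have := congrFun hc i0
      rw [Pi.add_apply, Pi.smul_apply, hvi0, smul_eq_mul] at this
      have h0 : (2:ZMod 3) = 0 := by linear_combination -this
      exact absurd h0 (by decide)
    have h3 : y + v ≠ y + (2:ZMod 3) • v := by
      intro hc
      have := congrFun hc i0
      rw [Pi.add_apply, Pi.add_apply, Pi.smul_apply, hvi0, smul_eq_mul] at this
      have h0 : (1:ZMod 3) = 2 := by linear_combination this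
      exact absurd h0 (by decide)
    rw [Finset.card_insert_of_notMem (by simp [h1, h2]),
      Finset.card_insert_of_notMem (by simp [h3]), Finset.card_singleton]
  have hfiber_finset : ∀ y ∈ t, Finset.univ.filter (fun x => π x = y)
      = {y, y + v, y + (2:ZMod 3) • v} := by
    intro y hy
    ext x
    rw [Finset.mem_filter]
    simp only [Finset.mem_univ, true_and, Finset.mem_insert, Finset.mem_singleton]
    rw [hfiber_eq y hy x]
    constructor
    · rintro ⟨s, rfl⟩
      rcases z3 s with rfl | rfl | rfl
      · left; simp
      · right; left; simp
      · right; right; rfl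
    · rintro (rfl | rfl | rfl)
      · exact ⟨0, by simp⟩
      · exact ⟨1, by simp⟩
      · exact ⟨2, rfl⟩
  have huniv_card : (3:ℕ) ^ n = 3 * t.card := by
    have h1 := Finset.card_eq_sum_card_fiberwise
      (f := π) (s := Finset.univ) (t := t)
      (fun x _ => by rw [htdef]; exact Finset.mem_image_of_mem π (Finset.mem_univ x))
    have h2 : ∀ y ∈ t, (Finset.univ.filter (fun x => π x = y)).card = 3 := by
      intro y hy
      rw [hfiber_finset y hy, htriple]
    rw [Finset.sum_congr rfl h2, Finset.sum_const, smul_eq_mul] at h1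
    have : (Finset.univ : Finset (V n)).card = 3 ^ n := by
      rw [Finset.card_univ]
      simp [Fintype.card_fun]
    rw [← this, h1, mul_comm]
  set CF : Finset (V n) := C.toFinite.toFinset with hCF
  have hCsum := Finset.card_eq_sum_card_fiberwise
    (f := π) (s := CF) (t := t)
    (fun x _ => by rw [htdef]; exact Finset.mem_image_of_mem π (Finset.mem_univ x))
  have hle : ∀ y ∈ t, (CF.filter (fun x => π x = y)).card ≤ 2 := by
    intro y hy
    by_contra hgt
    push_neg at hgt
    have hsubs : CF.filter (fun x => π x = y) ⊆ {y, y + v, y + (2:ZMod 3) • v} := by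
      intro x hx
      rw [Finset.mem_filter] at hx
      have : x ∈ Finset.univ.filter (fun x => π x = y) := by
        rw [Finset.mem_filter]; exact ⟨Finset.mem_univ x, hx.2⟩
      rwa [hfiber_finset y hy] at this
    have hcard3 : (CF.filter (fun x => π x = y)).card = 3 := by
      have := Finset.card_le_card hsubs
      rw [htriple] at this
      omega
    have heq : CF.filter (fun x => π x = y) = {y, y + v, y + (2:ZMod 3) • v} :=
      Finset.eq_of_subset_of_card_le hsubs (by rw [hcard3, htriple])
    have hall : ∀ x ∈ ({y, y + v, y + (2:ZMod 3) • v} : Finset (V n)), x ∈ C := by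
      intro x hx
      rw [← heq, Finset.mem_filter, hCF, Set.Finite.mem_toFinset] at hx
      exact hx.1
    have hthird : -(y + (y + v)) = y + (2:ZMod 3) • v := by
      funext i
      have : ∀ a b : ZMod 3, -(a + (a + b)) = a + 2 * b := by decide
      simpa using this (y i) (v i)
    have hline : IsLine (tri y (y + v)) := tri_isLine (by
      intro hc
      have := congrFun hc i0
      rw [Pi.add_apply, hvi0] at this
      simp at this)
    apply hC _ hline
    rw [tri_subset_iff, hthird]
    exact ⟨hall y (by simp), hall (y+v) (by simp), hall _ (by simp)⟩
  have : CF.card ≤ 2 * t.card := by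
    rw [hCsum]
    calc ∑ y ∈ t, (CF.filter (fun x => π x = y)).card ≤ ∑ y ∈ t, 2 :=
          Finset.sum_le_sum hle
      _ = 2 * t.card := by rw [Finset.sum_const, smul_eq_mul, mul_comm]
  have hCcard : C.ncard = CF.card := Set.ncard_eq_toFinset_card _ _
  have h3n : (3:ℕ) ^ n = 3 * 3 ^ (n - 1) := by
    conv_lhs => rw [show n = (n-1)+1 by omega]
    rw [pow_succ, mul_comm]
  omega

lemma lc_missing_line {W : Set (V n)} (hW : LC W)
    (h2 : ∃ w₁ ∈ W, ∃ w₂ ∈ W, w₁ ≠ w₂) (hne : W ≠ Set.univ) :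
    ∃ L, IsLine L ∧ L ⊆ Wᶜ := by
  obtain ⟨w₁, hw₁, w₂, hw₂, hww⟩ := h2
  obtain ⟨x₀, hx₀⟩ : ∃ x₀, x₀ ∉ W := by
    by_contra hc
    push_neg at hc
    exact hne (Set.eq_univ_of_forall hc)
  set b : V n := w₂ + x₀ - w₁ with hb
  have hab : x₀ ≠ b := by
    intro hc
    rw [hb] at hc
    exact hww (by linear_combination hc)
  refine ⟨tri x₀ b, tri_isLine hab, ?_⟩
  rw [tri_subset_iff]
  refine ⟨hx₀, ?_, ?_⟩
  · intro hbW
    apply hx₀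
    have : x₀ = b + w₁ - w₂ := by rw [hb]; abel
    rw [this]
    exact lc_sub hW hbW hw₁ hw₂
  · intro hcW
    apply hx₀
    have hcid : -(x₀ + b) = x₀ + w₁ - w₂ := by
      rw [hb]
      funext i
      have : ∀ x y z : ZMod 3, -(x + (y + x - z)) = x + z - y := by decide
      simpa using this (x₀ i) (w₂ i) (w₁ i)
    rw [hcid] at hcW
    have : x₀ = (x₀ + w₁ - w₂) + w₂ - w₁ := by abel
    rw [this]
    exact lc_sub hW hcW hw₂ hw₁

end GCap

namespace GCap

variable {n : ℕ}

lemma lineDeg_pos_elim {S : Set (V n)} {Q : V n} (h : 0 < lineDeg S Q) :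
    ∃ x, x ≠ Q ∧ Q ∈ S ∧ x ∈ S ∧ -(Q + x) ∈ S := by
  rw [lineDeg, Set.ncard_pos (Set.toFinite _)] at h
  obtain ⟨L, hline, hQ, hsub⟩ := h
  obtain ⟨x, hx, rfl⟩ := line_eq_tri hline hQ
  exact ⟨x, hx, hsub (mem_tri_left _ _), hsub (mem_tri_mid _ _), hsub (mem_tri_third _ _)⟩

lemma rem_ne_univ {P : ℕ → V n} {k : ℕ} (hg : GreedyRun P k) : Rem P k ≠ Set.univ := by
  cases k with
  | zero =>
    rw [Rem_zero]
    exact Set.empty_ne_univ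
  | succ m =>
    intro hc
    obtain ⟨_, hpos, _⟩ := hg m (Nat.lt_succ_self m)
    rw [greedySeq_eq] at hpos
    obtain ⟨x, hxne, _, hxS, _⟩ := lineDeg_pos_elim hpos
    have hx1 : x ∈ Rem P (m+1) := hc ▸ Set.mem_univ x
    rw [Rem_succ] at hx1
    rcases Set.mem_insert_iff.mp hx1 with h | h
    · exact hxne h
    · exact hxS h

lemma lc_endcase {W : Set (V n)} (hn : 1 ≤ n) (hW : LC W) (hcap : IsCapset Wᶜ)
    (hge : 3 ^ (n-1) ≤ W.ncard) (hne : W ≠ Set.univ) : W.ncard = 3 ^ (n-1) := by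
  by_cases h2 : ∃ w₁ ∈ W, ∃ w₂ ∈ W, w₁ ≠ w₂
  · obtain ⟨L, hline, hsub⟩ := lc_missing_line hW h2 hne
    exact absurd hsub (hcap L hline)
  · push_neg at h2
    have hle1 : W.ncard ≤ 1 := (Set.ncard_le_one (Set.toFinite _)).mpr h2
    have hzero : n - 1 = 0 := by
      by_contra hz
      have : 3 ≤ 3 ^ (n-1) := by
        calc (3:ℕ) = 3 ^ 1 := by norm_num
          _ ≤ 3 ^ (n-1) := Nat.pow_le_pow_right (by norm_num) (by omega)
      omega
    rw [hzero] at hge ⊢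
    omega

lemma exists_hyperplane_time {P : ℕ → V n} {k : ℕ} (hn : 1 ≤ n) (hg : GreedyRun P k)
    (hcap : IsCapset ((Rem P k)ᶜ)) :
    ∃ j ≤ k, LC (Rem P j) ∧ (Rem P j).ncard = 3 ^ (n - 1) := by
  have hinv := inv_all hg k le_rfl
  have hcompl : (Rem P k).ncard + ((Rem P k)ᶜ).ncard = 3 ^ n := by
    rw [Set.ncard_add_ncard_compl, card_V]
  have hbound := capset_card_le hn hcap
  have h3n : (3:ℕ) ^ n = 3 * 3 ^ (n - 1) := by
    have h : n - 1 + 1 = n := by omega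
    conv_lhs => rw [← h]
    rw [pow_succ]
    ring
  have hge : 3 ^ (n-1) ≤ (Rem P k).ncard := by omega
  have hneu := rem_ne_univ hg
  rcases hinv with ⟨hlc, _⟩ | ⟨j, w₀, d, hj, hlcW, hw₀, hd, hPj, hins, hsubU⟩
  · exact ⟨k, le_rfl, hlc, lc_endcase hn hlc hcap hge hneu⟩
  · have hUlc : LC (USpan (Rem P j) w₀ (P j)) := USpan_LC hlcW _ _
    have hUcard : (USpan (Rem P j) w₀ (P j)).ncard = 3 ^ (d+1) := by
      rw [USpan_ncard hlcW hw₀ hPj, hd, pow_succ, mul_comm]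
    have hUle : (3:ℕ) ^ (d+1) ≤ 3 ^ n := by
      rw [← hUcard, ← card_V (n := n), ← Set.ncard_univ]
      exact Set.ncard_le_ncard (Set.subset_univ _) (Set.toFinite _)
    have hd1n : d + 1 ≤ n := (Nat.pow_le_pow_iff_right (by norm_num)).mp hUle
    rcases Nat.lt_or_ge (d+1) n with hlt | hgen
    · have hle1 : 3 ^ (n-1) ≤ 3 ^ (d+1) := by
        calc (3:ℕ) ^ (n-1) ≤ (Rem P k).ncard := hge
          _ ≤ (USpan (Rem P j) w₀ (P j)).ncard := Set.ncard_le_ncard hsubU (Set.toFinite _)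
          _ = 3 ^ (d+1) := hUcard
      have hle2 : (3:ℕ) ^ (d+1) ≤ 3 ^ (n-1) := Nat.pow_le_pow_right (by norm_num) (by omega)
      have hek : Rem P k = USpan (Rem P j) w₀ (P j) :=
        Set.eq_of_subset_of_ncard_le hsubU (by omega) (Set.toFinite _)
      have hlck : LC (Rem P k) := by rw [hek]; exact hUlc
      exact ⟨k, le_rfl, hlck, lc_endcase hn hlck hcap hge hneu⟩
    · have hdn : d = n - 1 := by omega
      exact ⟨j, le_of_lt hj, hlcW, by rw [hd, hdn]⟩

end GCap

namespace GCap

variable {n : ℕ}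

lemma lc_translate_zero {W : Set (V n)} (hW : LC W) {w₀ : V n} (hw₀ : w₀ ∈ W) :
    (0 : V n) ∈ {y : V n | y + w₀ ∈ W} ∧
    (∀ y ∈ {y : V n | y + w₀ ∈ W}, ∀ z ∈ {y : V n | y + w₀ ∈ W},
      y + z ∈ {y : V n | y + w₀ ∈ W}) ∧
    (∀ y ∈ {y : V n | y + w₀ ∈ W}, -y ∈ {y : V n | y + w₀ ∈ W}) := by
  refine ⟨by simpa using hw₀, ?_, ?_⟩
  · intro y hy z hz
    have : (y + w₀) + (z + w₀) - w₀ ∈ W := lc_sub hW hy hz hw₀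
    have he : (y + w₀) + (z + w₀) - w₀ = y + z + w₀ := by abel
    rwa [he] at this
  · intro y hy
    have : w₀ + w₀ - (y + w₀) ∈ W := lc_sub hW hw₀ hw₀ hy
    have he : w₀ + w₀ - (y + w₀) = -y + w₀ := by abel
    rwa [he] at this

lemma lc_hyperplane {W : Set (V n)} (hn : 1 ≤ n) (hW : LC W) {w₀ : V n} (hw₀ : w₀ ∈ W)
    (hcard : W.ncard = 3 ^ (n-1)) :
    ∃ (a : V n) (b : ZMod 3), a ≠ 0 ∧ W = {x | ∑ i, a i * x i = b} := by
  classical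
  have h3n : (3:ℕ) ^ n = 3 * 3 ^ (n - 1) := by
    have h : n - 1 + 1 = n := by omega
    conv_lhs => rw [← h]
    rw [pow_succ]
    ring
  -- pick a point outside W
  have hWneu : W ≠ Set.univ := by
    intro hc
    rw [hc, Set.ncard_univ, card_V] at hcard
    have : (1:ℕ) ≤ 3 ^ (n-1) := Nat.one_le_pow _ _ (by norm_num)
    omega
  obtain ⟨x₁, hx₁⟩ : ∃ x₁, x₁ ∉ W := by
    by_contra hc
    push_neg at hc
    exact hWneu (Set.eq_univ_of_forall hc)
  set v : V n := x₁ - w₀ with hv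
  set W₀ : Set (V n) := {y : V n | y + w₀ ∈ W} with hW₀
  obtain ⟨hz0, hzadd, hzneg⟩ := lc_translate_zero hW hw₀
  have hvW₀ : v ∉ W₀ := by
    intro hc
    apply hx₁
    have hm : v + w₀ ∈ W := hc
    have he : v + w₀ = x₁ := by rw [hv]; abel
    rwa [he] at hm
  -- the span is everything
  have hDuniv : USpan W w₀ x₁ = Set.univ := by
    have hc : (USpan W w₀ x₁).ncard = 3 ^ n := by
      rw [USpan_ncard hW hw₀ hx₁, hcard, h3n]
    apply Set.eq_of_subset_of_ncard_le (Set.subset_univ _) _ (Set.toFinite _)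
    rw [hc, Set.ncard_univ, card_V]
  -- existence of the coordinate
  have hex : ∀ y : V n, ∃ t : ZMod 3, y - t • v ∈ W₀ := by
    intro y
    have : y + w₀ ∈ USpan W w₀ x₁ := by rw [hDuniv]; trivial
    obtain ⟨w, hw, t, hwt⟩ := this
    refine ⟨t, ?_⟩
    show y - t • v + w₀ ∈ W
    have : y - t • v + w₀ = w := by
      rw [hv]
      have := hwt
      have h2 : y = w + t • (x₁ - w₀) - w₀ := by rw [← hwt]; abel
      rw [h2]; abel
    rwa [this]
  set g : V n → ZMod 3 := fun y => Classical.choose (hex y) with hg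
  have hgspec : ∀ y, y - g y • v ∈ W₀ := fun y => Classical.choose_spec (hex y)
  have huniq : ∀ (y : V n) (t : ZMod 3), y - t • v ∈ W₀ → g y = t := by
    intro y t ht
    by_contra hne
    have hdm : (g y - t) • v ∈ W₀ := by
      have := hzadd _ ht _ (hzneg _ (hgspec y))
      have he : y - t • v + -(y - g y • v) = (g y - t) • v := by
        rw [sub_smul]; abel
      rwa [he] at this
    have hvin : v ∈ W₀ := by
      rcases z3 (g y - t) with h0 | h1 | h2
      · exact absurd (by rwa [sub_eq_zero] at h0) hne
      · rwa [h1, one_smul] at hdm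
      · have := hzneg _ (by rwa [h2] at hdm)
        rwa [smul2, neg_neg] at this
    exact hvW₀ hvin
  have hgadd : ∀ y z : V n, g (y + z) = g y + g z := by
    intro y z
    apply huniq
    have := hzadd _ (hgspec y) _ (hgspec z)
    have he : y - g y • v + (z - g z • v) = y + z - (g y + g z) • v := by
      rw [add_smul]; abel
    rwa [he] at this
  have hg0 : g 0 = 0 := huniq 0 0 (by rw [zero_smul, sub_zero]; exact hz0)
  have hgsmul : ∀ (r : ZMod 3) (y : V n), g (r • y) = r * g y := by
    intro r y
    rcases z3 r with rfl | rfl | rfl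
    · rw [zero_smul, hg0, zero_mul]
    · rw [one_smul, one_mul]
    · rw [two_smul, hgadd, two_mul]
  set G : V n →+ ZMod 3 := AddMonoidHom.mk' g hgadd with hG
  set a : V n := fun i => g (Pi.single i 1) with ha
  have hsum : ∀ x : V n, g x = ∑ i, a i * x i := by
    intro x
    have hx : x = ∑ i, Pi.single i (x i) := (Finset.univ_sum_single x).symm
    have : g x = G x := rfl
    rw [this]
    conv_lhs => rw [hx]
    rw [map_sum]
    apply Finset.sum_congr rfl
    intro i _
    have h1 : Pi.single i (x i) = x i • (Pi.single i 1 : V n) := by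
      funext j
      simp only [Pi.smul_apply, smul_eq_mul]
      by_cases hj : j = i
      · subst hj; simp
      · simp [Pi.single_eq_of_ne hj]
    show g _ = _
    rw [h1, hgsmul, ha, mul_comm]
  have hgv : g v = 1 := huniq v 1 (by rw [one_smul, sub_self]; exact hz0)
  refine ⟨a, g w₀, ?_, ?_⟩
  · intro hc
    have : g v = 0 := by
      rw [hsum v, hc]
      simp
    rw [hgv] at this
    exact one_ne_zero this
  · ext x
    simp only [Set.mem_setOf_eq, ← hsum]
    constructor
    · intro hx
      have h0 : g (x - w₀) = 0 := huniq _ 0 (by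
        rw [zero_smul, sub_zero]
        show x - w₀ + w₀ ∈ W
        rwa [sub_add_cancel])
      have := hgadd (x - w₀) w₀
      rw [sub_add_cancel, h0, zero_add] at this
      exact this
    · intro hx
      have h0 : g (x - w₀) = 0 := by
        have := hgadd (x - w₀) w₀
        rw [sub_add_cancel, hx] at this
        linear_combination -this
      have hmem : x - w₀ ∈ W₀ := by
        have := hgspec (x - w₀)
        rwa [h0, zero_smul, sub_zero] at this
      have : x - w₀ + w₀ ∈ W := hmem
      rwa [sub_add_cancel] at this

end GCap

namespace GCap

variable {n m : ℕ}

/-! ### affine transfer of lines and degrees -/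

lemma aff_apply_add (φ : (V m) →ᵃ[ZMod 3] V n) (p u : V m) :
    φ (p + u) = φ p + φ.linear u := by
  have := AffineMap.map_vadd φ p u
  simpa [vadd_eq_add, add_comm] using this

lemma aff_linear_ne_zero (φ : (V m) →ᵃ[ZMod 3] V n) (hinj : Function.Injective φ)
    {v : V m} (hv : v ≠ 0) : φ.linear v ≠ 0 := by
  intro hc
  apply hv
  have h1 : φ (0 + v) = φ 0 + φ.linear v := aff_apply_add φ 0 v
  rw [hc, add_zero, zero_add] at h1
  have := hinj h1
  rw [this]

lemma affine_image_line (φ : (V m) →ᵃ[ZMod 3] V n) (hinj : Function.Injective φ)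
    {L : Set (V m)} (hL : IsLine L) : IsLine (φ '' L) := by
  obtain ⟨p, v, hv, rfl⟩ := hL
  refine ⟨φ p, φ.linear v, aff_linear_ne_zero φ hinj hv, ?_⟩
  ext y
  constructor
  · rintro ⟨x, ⟨t, rfl⟩, rfl⟩
    refine ⟨t, ?_⟩
    rw [aff_apply_add, φ.linear.map_smul]
  · rintro ⟨t, rfl⟩
    refine ⟨p + t • v, ⟨t, rfl⟩, ?_⟩
    rw [aff_apply_add, φ.linear.map_smul]

lemma affine_preimage_line (φ : (V m) →ᵃ[ZMod 3] V n) (hinj : Function.Injective φ)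
    {L' : Set (V n)} (hL' : IsLine L') (hsub : L' ⊆ Set.range φ) : IsLine (φ ⁻¹' L') := by
  obtain ⟨p, v, hv, rfl⟩ := hL'
  obtain ⟨p', hp'⟩ := hsub (show p ∈ {x | ∃ t : ZMod 3, x = p + t • v} from ⟨0, by simp⟩)
  obtain ⟨q', hq'⟩ := hsub (show p + v ∈ {x | ∃ t : ZMod 3, x = p + t • v} from ⟨1, by simp⟩)
  have h1 : φ (p' + (q' - p')) = φ p' + φ.linear (q' - p') := aff_apply_add _ _ _
  rw [add_sub_cancel] at h1
  have hlin : φ.linear (q' - p') = v := by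
    rw [hq', hp'] at h1
    exact (add_left_cancel h1).symm
  have hne : q' - p' ≠ 0 := by
    intro hc
    apply hv
    rw [← hlin, hc, map_zero]
  refine ⟨p', q' - p', hne, ?_⟩
  ext x
  simp only [Set.mem_preimage, Set.mem_setOf_eq]
  constructor
  · rintro ⟨t, ht⟩
    refine ⟨t, hinj ?_⟩
    rw [ht, aff_apply_add, φ.linear.map_smul, hlin, hp']
  · rintro ⟨t, rfl⟩
    refine ⟨t, ?_⟩
    rw [aff_apply_add, φ.linear.map_smul, hlin, hp']

lemma affine_lineDeg (φ : (V m) →ᵃ[ZMod 3] V n) (hinj : Function.Injective φ)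
    {A : Set (V n)} (hA : A ⊆ Set.range φ) {x' : V m} (hx : φ x' ∈ A) :
    lineDeg (φ ⁻¹' A) x' = lineDeg A (φ x') := by
  unfold lineDeg
  have himg : {L' : Set (V n) | IsLine L' ∧ φ x' ∈ L' ∧ L' ⊆ A}
      = (fun L => φ '' L) '' {L : Set (V m) | IsLine L ∧ x' ∈ L ∧ L ⊆ φ ⁻¹' A} := by
    ext L'
    simp only [Set.mem_setOf_eq, Set.mem_image]
    constructor
    · rintro ⟨hl, hxl, hLA⟩
      refine ⟨φ ⁻¹' L', ⟨affine_preimage_line φ hinj hl (hLA.trans hA), hxl, fun y hy => hLA hy⟩, ?_⟩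
      exact Set.image_preimage_eq_of_subset (hLA.trans hA)
    · rintro ⟨L, ⟨hl, hxl, hLA⟩, rfl⟩
      refine ⟨affine_image_line φ hinj hl, ⟨x', hxl, rfl⟩, ?_⟩
      rintro y ⟨z, hz, rfl⟩
      exact hLA hz
  rw [himg]
  rw [Set.ncard_image_of_injective _ (Set.image_injective.mpr hinj)]

/-! ### localization to a parallel hyperplane -/

lemma lineDeg_localize {S H0 Hc : Set (V n)} (hS : S ⊆ H0ᶜ)
    (hconf : ∀ x ∈ Hc, ∀ L : Set (V n), IsLine L → x ∈ L → L ⊆ H0ᶜ → L ⊆ Hc)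
    {x : V n} (hx : x ∈ S ∩ Hc) : lineDeg S x = lineDeg (S ∩ Hc) x := by
  unfold lineDeg
  congr 1
  ext L
  simp only [Set.mem_setOf_eq]
  constructor
  · rintro ⟨hl, hxL, hLS⟩
    exact ⟨hl, hxL, Set.subset_inter hLS (hconf x hx.2 L hl hxL (hLS.trans hS))⟩
  · rintro ⟨hl, hxL, hLsub⟩
    exact ⟨hl, hxL, hLsub.trans Set.inter_subset_left⟩

/-! ### index bookkeeping for the restricted run -/

noncomputable def nxt (P : ℕ → V n) (Hc : Set (V n)) (k s : ℕ) : ℕ :=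
  sInf {i | (s ≤ i ∧ i < k ∧ P i ∈ Hc) ∨ i = k}

lemma nxt_le (P : ℕ → V n) (Hc : Set (V n)) (k s : ℕ) : nxt P Hc k s ≤ k :=
  Nat.sInf_le (Or.inr rfl)

lemma nxt_spec (P : ℕ → V n) (Hc : Set (V n)) (k s : ℕ) :
    nxt P Hc k s = k ∨
      (s ≤ nxt P Hc k s ∧ nxt P Hc k s < k ∧ P (nxt P Hc k s) ∈ Hc) := by
  have h := Nat.sInf_mem (s := {i | (s ≤ i ∧ i < k ∧ P i ∈ Hc) ∨ i = k}) ⟨k, Or.inr rfl⟩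
  rcases h with h | h
  · exact Or.inr h
  · exact Or.inl h

lemma nxt_min (P : ℕ → V n) (Hc : Set (V n)) (k s : ℕ) {i : ℕ} (hsi : s ≤ i)
    (hik : i < k) (hi : i < nxt P Hc k s) : P i ∉ Hc := by
  have := Nat.notMem_of_lt_sInf hi
  simp only [Set.mem_setOf_eq, not_or] at this
  intro hP
  exact this.1 ⟨hsi, hik, hP⟩

noncomputable def idx (P : ℕ → V n) (Hc : Set (V n)) (k j : ℕ) : ℕ → ℕ
  | 0 => nxt P Hc k j
  | (l+1) => nxt P Hc k (idx P Hc k j l + 1)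

lemma idx_le (P : ℕ → V n) (Hc : Set (V n)) (k j : ℕ) (l : ℕ) : idx P Hc k j l ≤ k := by
  cases l with
  | zero => exact nxt_le _ _ _ _
  | succ l => exact nxt_le _ _ _ _

lemma idx_ge (P : ℕ → V n) (Hc : Set (V n)) (k j : ℕ) (l : ℕ) :
    j + l ≤ idx P Hc k j l ∨ idx P Hc k j l = k := by
  induction l with
  | zero =>
    rcases nxt_spec P Hc k j with h | h
    · exact Or.inr h
    · left; show j + 0 ≤ nxt P Hc k j; simpa using h.1
  | succ l ih =>
    rcases nxt_spec P Hc k (idx P Hc k j l + 1) with h | h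
    · exact Or.inr h
    · rcases ih with ih | ih
      · left
        show j + (l+1) ≤ nxt P Hc k (idx P Hc k j l + 1)
        omega
      · left
        show j + (l+1) ≤ nxt P Hc k (idx P Hc k j l + 1)
        have hk := idx_le P Hc k j (l+1)
        rw [ih] at h
        omega
  -- note: in the last case h.1 : k + 1 ≤ nxt ... but nxt ≤ k, contradiction handled by omega

lemma idx_eventually (P : ℕ → V n) (Hc : Set (V n)) (k j : ℕ) : ∃ l, idx P Hc k j l = k := by
  rcases idx_ge P Hc k j (k + 1) with h | h
  · have := idx_le P Hc k j (k+1)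
    omega
  · exact ⟨k + 1, h⟩

lemma idx_mem (P : ℕ → V n) (Hc : Set (V n)) (k j : ℕ) (l : ℕ)
    (h : idx P Hc k j l < k) : P (idx P Hc k j l) ∈ Hc := by
  cases l with
  | zero =>
    rcases nxt_spec P Hc k j with hs | hs
    · exact absurd hs (by show idx P Hc k j 0 ≠ k; omega)
    · exact hs.2.2
  | succ l =>
    rcases nxt_spec P Hc k (idx P Hc k j l + 1) with hs | hs
    · exact absurd hs (by show idx P Hc k j (l+1) ≠ k; omega)
    · exact hs.2.2

lemma idx_ge_j (P : ℕ → V n) (Hc : Set (V n)) {k j : ℕ} (hjk : j ≤ k) (l : ℕ) :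
    j ≤ idx P Hc k j l := by
  rcases idx_ge P Hc k j l with h | h
  · omega
  · omega

lemma idx_mono_succ (P : ℕ → V n) (Hc : Set (V n)) (k j : ℕ) (l : ℕ) :
    idx P Hc k j l ≤ idx P Hc k j (l + 1) := by
  rcases nxt_spec P Hc k (idx P Hc k j l + 1) with h | h
  · have := idx_le P Hc k j l
    show idx P Hc k j l ≤ nxt P Hc k (idx P Hc k j l + 1)
    omega
  · show idx P Hc k j l ≤ nxt P Hc k (idx P Hc k j l + 1)
    omega

/-- states between removals in `Hc` don't change on `Hc`. -/
lemma seg_const {P : ℕ → V n} {Hc : Set (V n)} {s e : ℕ} (hse : s ≤ e)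
    (hskip : ∀ i, s ≤ i → i < e → P i ∉ Hc) :
    (Rem P e)ᶜ ∩ Hc = (Rem P s)ᶜ ∩ Hc := by
  induction e, hse using Nat.le_induction with
  | base => rfl
  | succ e hse ih =>
    have hPe : P e ∉ Hc := hskip e hse (Nat.lt_succ_self e)
    have ih' := ih (fun i h1 h2 => hskip i h1 (Nat.lt_succ_of_lt h2))
    rw [← ih']
    ext x
    simp only [Set.mem_inter_iff, Set.mem_compl_iff, Rem_succ, Set.mem_insert_iff, not_or]
    constructor
    · rintro ⟨⟨h1, h2⟩, h3⟩; exact ⟨h2, h3⟩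
    · rintro ⟨h1, h2⟩
      refine ⟨⟨?_, h1⟩, h2⟩
      intro hc
      rw [hc] at h2
      exact hPe h2

end GCap

namespace GCap

variable {n : ℕ}

lemma restricted_transfer
    {P : ℕ → V n} {k j : ℕ} (hjk : j ≤ k) (hg : GreedyRun P k)
    (hcap : IsCapset ((Rem P k)ᶜ))
    {H0 Hc : Set (V n)} (hRj : Rem P j = H0) (hdisj : Hc ∩ H0 = ∅)
    (hconf : ∀ x ∈ Hc, ∀ L : Set (V n), IsLine L → x ∈ L → L ⊆ H0ᶜ → L ⊆ Hc)
    {φ : (V (n-1)) →ᵃ[ZMod 3] (V n)}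
    (hinj : Function.Injective φ) (hrange : Set.range φ = Hc) :
    ∃ (k' : ℕ) (Q : ℕ → V (n-1)),
      GreedyRun Q k' ∧ φ ⁻¹' ((Rem P k)ᶜ ∩ Hc) = greedySeq Q k' ∧
      IsCapset (φ ⁻¹' ((Rem P k)ᶜ ∩ Hc)) := by
  classical
  set ix : ℕ → ℕ := idx P Hc k j with hix
  set Q : ℕ → V (n-1) := fun l => Function.invFun φ (P (ix l)) with hQ
  have hev : ∃ l, ix l = k := idx_eventually P Hc k j
  set k' : ℕ := Nat.find hev with hk'
  have hk'spec : ix k' = k := Nat.find_spec hev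
  have hk'min : ∀ l < k', ix l ≠ k := fun l hl => Nat.find_min hev hl
  have hixlt : ∀ l < k', ix l < k :=
    fun l hl => lt_of_le_of_ne (idx_le P Hc k j l) (hk'min l hl)
  have hφQ : ∀ l, ix l < k → φ (Q l) = P (ix l) := by
    intro l hl
    have hmem : P (ix l) ∈ Set.range φ := by
      rw [hrange]; exact idx_mem P Hc k j l hl
    exact Function.invFun_eq hmem
  have hHcH0 : ∀ x ∈ Hc, x ∉ H0 := by
    intro x hx hx0
    have hb : x ∈ Hc ∩ H0 := ⟨hx, hx0⟩
    rw [hdisj] at hb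
    exact hb
  have hH0sub : ∀ i, j ≤ i → H0 ⊆ Rem P i := by
    intro i hi
    rw [← hRj]
    exact Rem_mono P hi
  have hrangeHc : ∀ x' : V (n-1), φ x' ∈ Hc := by
    intro x'
    rw [← hrange]; exact ⟨x', rfl⟩
  have hstate : ∀ l ≤ k', greedySeq Q l = φ ⁻¹' ((Rem P (ix l))ᶜ ∩ Hc) := by
    intro l
    induction l with
    | zero =>
      intro _
      show Set.univ = _
      symm
      rw [Set.eq_univ_iff_forall]
      intro x'
      simp only [Set.mem_preimage, Set.mem_inter_iff, Set.mem_compl_iff]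
      refine ⟨?_, hrangeHc x'⟩
      rintro ⟨i, hi, hPi⟩
      by_cases hij : i < j
      · have hmem : P i ∈ Rem P j := ⟨i, hij, rfl⟩
        rw [hRj] at hmem
        have hc2 : P i ∈ Hc := by rw [← hPi]; exact hrangeHc x'
        exact hHcH0 (P i) hc2 hmem
      · push_neg at hij
        have hik : i < k := lt_of_lt_of_le hi (idx_le P Hc k j 0)
        have hnxt : i < nxt P Hc k j := hi
        have := nxt_min P Hc k j hij hik hnxt
        apply this
        rw [← hPi]
        exact hrangeHc x'
    | succ l ihl =>
      intro hl1
      have hlk : l < k' := lt_of_lt_of_le (Nat.lt_succ_self l) hl1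
      have hilt : ix l < k := hixlt l hlk
      have ih := ihl (le_of_lt hlk)
      show greedySeq Q l \ {Q l} = _
      rw [ih]
      have hse : ix l + 1 ≤ ix (l + 1) := by
        show ix l + 1 ≤ nxt P Hc k (ix l + 1)
        rcases nxt_spec P Hc k (ix l + 1) with h | h
        · omega
        · exact h.1
      have hskip : ∀ i, ix l + 1 ≤ i → i < ix (l+1) → P i ∉ Hc := by
        intro i h1 h2
        have hik : i < k := lt_of_lt_of_le h2 (idx_le P Hc k j (l+1))
        exact nxt_min P Hc k (ix l + 1) h1 hik h2
      have hcc : (Rem P (ix (l+1)))ᶜ ∩ Hc = (Rem P (ix l + 1))ᶜ ∩ Hc :=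
        seg_const hse hskip
      rw [hcc]
      ext x'
      simp only [Set.mem_diff, Set.mem_preimage, Set.mem_inter_iff, Set.mem_compl_iff,
        Set.mem_singleton_iff, Rem_succ, Set.mem_insert_iff, not_or]
      constructor
      · rintro ⟨⟨h1, h2⟩, h3⟩
        refine ⟨⟨?_, h1⟩, h2⟩
        intro hc
        apply h3
        apply hinj
        rw [hφQ l hilt, hc]
      · rintro ⟨⟨h1, h2⟩, h3⟩
        refine ⟨⟨h2, h3⟩, ?_⟩
        intro hc
        apply h1
        rw [← hφQ l hilt, hc]
  refine ⟨k', Q, ?_, ?_, ?_⟩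
  · -- greedy conditions
    intro l hl
    have hilt : ix l < k := hixlt l hl
    obtain ⟨hP1, hP2, hP3⟩ := hg (ix l) hilt
    rw [greedySeq_eq] at hP1 hP2 hP3
    have hjle : j ≤ ix l := idx_ge_j P Hc hjk l
    have hSsub : (Rem P (ix l))ᶜ ⊆ H0ᶜ := Set.compl_subset_compl.mpr (hH0sub (ix l) hjle)
    have hA : (Rem P (ix l))ᶜ ∩ Hc ⊆ Set.range φ := by
      rw [hrange]; exact Set.inter_subset_right
    have hPHc : P (ix l) ∈ Hc := idx_mem P Hc k j l hilt
    have hPmem : P (ix l) ∈ (Rem P (ix l))ᶜ ∩ Hc := ⟨hP1, hPHc⟩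
    have hst := hstate l (le_of_lt hl)
    have hdegP : lineDeg (greedySeq Q l) (Q l) = lineDeg ((Rem P (ix l))ᶜ) (P (ix l)) := by
      rw [hst]
      rw [show (⇑φ ⁻¹' ((Rem P (ix l))ᶜ ∩ Hc)) = (⇑φ ⁻¹' ((Rem P (ix l))ᶜ ∩ Hc)) from rfl]
      rw [affine_lineDeg φ hinj hA (by rw [hφQ l hilt]; exact hPmem)]
      rw [hφQ l hilt]
      exact (lineDeg_localize hSsub hconf hPmem).symm
    refine ⟨?_, ?_, ?_⟩
    · rw [hst]
      exact Set.mem_preimage.mpr (by rw [hφQ l hilt]; exact hPmem)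
    · rw [hdegP]
      exact hP2
    · intro y hy
      rw [hdegP]
      rw [hst] at hy
      have hyA : φ y ∈ (Rem P (ix l))ᶜ ∩ Hc := hy
      have hdegy : lineDeg (greedySeq Q l) y = lineDeg ((Rem P (ix l))ᶜ) (φ y) := by
        rw [hst, affine_lineDeg φ hinj hA hyA]
        exact (lineDeg_localize hSsub hconf hyA).symm
      rw [hdegy]
      exact hP3 (φ y) hyA.1
  · have := hstate k' le_rfl
    rw [hk'spec] at this
    exact this.symm
  · intro L hL hsub
    apply hcap (φ '' L) (affine_image_line φ hinj hL)
    rintro y ⟨z, hz, rfl⟩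
    exact (hsub hz).1

end GCap

namespace GCap

variable {n : ℕ}

lemma hyperplane_confine {a : V n} {b c : ZMod 3} (hbc : c ≠ b) :
    ∀ x ∈ {x : V n | ∑ i, a i * x i = c}, ∀ L : Set (V n), IsLine L → x ∈ L →
      L ⊆ {x : V n | ∑ i, a i * x i = b}ᶜ → L ⊆ {x : V n | ∑ i, a i * x i = c} := by
  intro x hx L hL hxL hLb
  obtain ⟨y, hyne, rfl⟩ := line_eq_tri hL hxL
  have hlin3 : (∑ i, a i * (-(x + y)) i) = -((∑ i, a i * x i) + ∑ i, a i * y i) := by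
    rw [← Finset.sum_add_distrib, ← Finset.sum_neg_distrib]
    apply Finset.sum_congr rfl
    intro i _
    simp only [Pi.neg_apply, Pi.add_apply]
    ring
  have hx' : (∑ i, a i * x i) = c := hx
  have hyb : (∑ i, a i * y i) ≠ b := hLb (mem_tri_mid x y)
  have h3b : (∑ i, a i * (-(x + y)) i) ≠ b := hLb (mem_tri_third x y)
  rw [hlin3, hx'] at h3b
  have hyc : (∑ i, a i * y i) = c := by
    have key : ∀ b c u : ZMod 3, c ≠ b → u ≠ b → -(c + u) ≠ b → u = c := by decide
    exact key b c _ hbc hyb h3b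
  rintro z hz
  rcases mem_tri.mp hz with rfl | rfl | rfl
  · exact hx
  · exact hyc
  · show (∑ i, a i * (-(x + y)) i) = c
    rw [hlin3, hx', hyc]
    have : ∀ c : ZMod 3, -(c + c) = c := by decide
    exact this c

theorem main_thm (hn : 1 ≤ n) (C : Set (Fin n → ZMod 3))
    (hC : ∃ (k : ℕ) (P : ℕ → (Fin n → ZMod 3)),
      (∀ i < k, P i ∈ greedySeq P i ∧ 0 < lineDeg (greedySeq P i) (P i) ∧
        ∀ Q ∈ greedySeq P i, lineDeg (greedySeq P i) Q ≤ lineDeg (greedySeq P i) (P i)) ∧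
      C = greedySeq P k ∧ IsCapset C) :
    ∃ H₀ H₁ H₂ : Set (Fin n → ZMod 3),
      (∃ (a : Fin n → ZMod 3) (b : ZMod 3), a ≠ 0 ∧
        H₀ = {x | ∑ i, a i * x i = b} ∧
        H₁ = {x | ∑ i, a i * x i = b + 1} ∧
        H₂ = {x | ∑ i, a i * x i = b + 2}) ∧ C ∩ H₀ = ∅ ∧
      (∀ φ : (Fin (n - 1) → ZMod 3) →ᵃ[ZMod 3] (Fin n → ZMod 3),
        Function.Injective φ → Set.range φ = H₁ →
        ∃ (k : ℕ) (P : ℕ → (Fin (n-1) → ZMod 3)),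
          (∀ i < k, P i ∈ greedySeq P i ∧ 0 < lineDeg (greedySeq P i) (P i) ∧
            ∀ Q ∈ greedySeq P i, lineDeg (greedySeq P i) Q ≤ lineDeg (greedySeq P i) (P i)) ∧
          (φ ⁻¹' (C ∩ H₁)) = greedySeq P k ∧ IsCapset (φ ⁻¹' (C ∩ H₁))) ∧
      (∀ φ : (Fin (n - 1) → ZMod 3) →ᵃ[ZMod 3] (Fin n → ZMod 3),
        Function.Injective φ → Set.range φ = H₂ →
        ∃ (k : ℕ) (P : ℕ → (Fin (n-1) → ZMod 3)),
          (∀ i < k, P i ∈ greedySeq P i ∧ 0 < lineDeg (greedySeq P i) (P i) ∧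
            ∀ Q ∈ greedySeq P i, lineDeg (greedySeq P i) Q ≤ lineDeg (greedySeq P i) (P i)) ∧
          (φ ⁻¹' (C ∩ H₂)) = greedySeq P k ∧ IsCapset (φ ⁻¹' (C ∩ H₂))) := by
  obtain ⟨k, P, hrun, hCeq, hcap⟩ := hC
  have hrun' : GreedyRun P k := hrun
  have hCeq' : C = (Rem P k)ᶜ := by rw [hCeq, greedySeq_eq]
  have hcap' : IsCapset ((Rem P k)ᶜ) := by rwa [hCeq'] at hcap
  obtain ⟨j, hjk, hlcj, hcardj⟩ := exists_hyperplane_time hn hrun' hcap'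
  have hjne : (Rem P j).Nonempty := by
    rw [Set.nonempty_iff_ne_empty]
    intro hc
    rw [hc, Set.ncard_empty] at hcardj
    exact (pow_pos (by norm_num : (0:ℕ) < 3) (n-1)).ne' hcardj.symm
  obtain ⟨w₀, hw₀⟩ := hjne
  obtain ⟨a, b, ha, hWeq⟩ := lc_hyperplane hn hlcj hw₀ hcardj
  refine ⟨{x | ∑ i, a i * x i = b}, {x | ∑ i, a i * x i = b + 1},
    {x | ∑ i, a i * x i = b + 2}, ⟨a, b, ha, rfl, rfl, rfl⟩, ?_, ?_, ?_⟩
  · rw [Set.eq_empty_iff_forall_notMem]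
    rintro x ⟨hxC, hxH⟩
    have hxj : x ∈ Rem P j := by rw [hWeq]; exact hxH
    have hxk : x ∈ Rem P k := Rem_mono P hjk hxj
    rw [hCeq'] at hxC
    exact hxC hxk
  · intro φ hinj hrange
    have hbc : (b + 1 : ZMod 3) ≠ b := by
      have : ∀ b : ZMod 3, b + 1 ≠ b := by decide
      exact this b
    have hdisj : {x : V n | ∑ i, a i * x i = b + 1} ∩ {x | ∑ i, a i * x i = b} = ∅ := by
      rw [Set.eq_empty_iff_forall_notMem]
      rintro x ⟨h1, h2⟩
      rw [Set.mem_setOf_eq] at h1 h2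
      rw [h2] at h1
      exact hbc h1.symm
    obtain ⟨k', Q, hgQ, heq, hcapQ⟩ := restricted_transfer hjk hrun' hcap' hWeq hdisj
      (hyperplane_confine hbc) hinj hrange
    refine ⟨k', Q, hgQ, ?_, ?_⟩
    · rw [hCeq']
      exact heq
    · rw [hCeq']
      exact hcapQ
  · intro φ hinj hrange
    have hbc : (b + 2 : ZMod 3) ≠ b := by
      have : ∀ b : ZMod 3, b + 2 ≠ b := by decide
      exact this b
    have hdisj : {x : V n | ∑ i, a i * x i = b + 2} ∩ {x | ∑ i, a i * x i = b} = ∅ := by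
      rw [Set.eq_empty_iff_forall_notMem]
      rintro x ⟨h1, h2⟩
      rw [Set.mem_setOf_eq] at h1 h2
      rw [h2] at h1
      exact hbc h1.symm
    obtain ⟨k', Q, hgQ, heq, hcapQ⟩ := restricted_transfer hjk hrun' hcap' hWeq hdisj
      (hyperplane_confine hbc) hinj hrange
    refine ⟨k', Q, hgQ, ?_, ?_⟩
    · rw [hCeq']
      exact heq
    · rw [hCeq']
      exact hcapQ

end GCap


/-- Every greedy capset `C ⊆ 𝔽₃ⁿ` (`n ≥ 1`) misses an affine hyperplane
`H₀`, and on each of the two parallel hyperplanes `H₁, H₂` it induces (via any affine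
bijection `φ : 𝔽₃ⁿ⁻¹ → Hᵢ`) a greedy capset of `𝔽₃ⁿ⁻¹`. -/
theorem greedy_capsets_stmt4 {n : ℕ} (hn : 1 ≤ n) (C : Set (Fin n → ZMod 3))
    (hC : IsGreedyCapset C) :
    ∃ H₀ H₁ H₂ : Set (Fin n → ZMod 3), ParallelTriple H₀ H₁ H₂ ∧ C ∩ H₀ = ∅ ∧
      (∀ φ : (Fin (n - 1) → ZMod 3) →ᵃ[ZMod 3] (Fin n → ZMod 3),
        Function.Injective φ → Set.range φ = H₁ → IsGreedyCapset (φ ⁻¹' (C ∩ H₁))) ∧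
      (∀ φ : (Fin (n - 1) → ZMod 3) →ᵃ[ZMod 3] (Fin n → ZMod 3),
        Function.Injective φ → Set.range φ = H₂ → IsGreedyCapset (φ ⁻¹' (C ∩ H₂))) := by
  obtain ⟨H₀, H₁, H₂, htrip, hmiss, h1, h2⟩ := GCap.main_thm hn C hC
  exact ⟨H₀, H₁, H₂, htrip, hmiss, h1, h2⟩
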